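/- Given a nonzero vector η' = (x', y', z') in R³, setting χ = atan2(y', x') and ν = atan2(−z', √(x'² + y'²)), the unit quaternion Q_p = Q_z(χ) Q_y(ν) satisfies Q_p (1,0,0) Q_p* = η'/‖η'‖. -/

import Mathlib

open Real Quaternion

/-- The four-quadrant inverse tangent `atan2 y x`, defined via the complex argument. -/
noncomputable def atan2 (y x : ℝ) : ℝ := Complex.arg ⟨x, y⟩

/-- The pure quaternion corresponding to the vector `(x, y, z) ∈ ℝ³`. -/
noncomputable def pureQ (x y z : ℝ) : Quaternion ℝ := ⟨0, x, y, z⟩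

/-- Rotation quaternion about the `z`-axis by angle `χ`. -/
noncomputable def Qz (χ : ℝ) : Quaternion ℝ := ⟨Real.cos (χ / 2), 0, 0, Real.sin (χ / 2)⟩

/-- Rotation quaternion about the `y`-axis by angle `ν`. -/
noncomputable def Qy (ν : ℝ) : Quaternion ℝ := ⟨Real.cos (ν / 2), 0, Real.sin (ν / 2), 0⟩

lemma rot (χ ν : ℝ) :
    Qz χ * Qy ν * pureQ 1 0 0 * star (Qz χ * Qy ν) =
      pureQ (Real.cos χ * Real.cos ν) (Real.sin χ * Real.cos ν) (-Real.sin ν) := by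
  have hχ : χ = 2 * (χ/2) := by ring
  have hν : ν = 2 * (ν/2) := by ring
  have pχ := Real.sin_sq_add_cos_sq (χ/2)
  have pν := Real.sin_sq_add_cos_sq (ν/2)
  rw [hχ, hν]
  ext <;>
    simp only [Quaternion.re_mul, Quaternion.imI_mul, Quaternion.imJ_mul, Quaternion.imK_mul, Quaternion.re_star, Quaternion.imI_star, Quaternion.imJ_star, Quaternion.imK_star] <;>
    simp [Qz, Qy, pureQ, Quaternion.ext_iff, Real.cos_two_mul, Real.sin_two_mul] <;>
    first
      | ring1
      | linear_combination (Real.sin (ν/2)^2 - Real.cos (ν/2)^2) * pχ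
          + (1 - 2*Real.cos (χ/2)^2) * pν
      | linear_combination (-(2*Real.sin (χ/2)*Real.cos (χ/2))) * pν
      | linear_combination (-(2*Real.sin (ν/2)*Real.cos (ν/2))) * pχ

lemma abs_mk (a b : ℝ) : ‖(⟨a, b⟩ : ℂ)‖ = Real.sqrt (a ^ 2 + b ^ 2) := by
  rw [Complex.norm_def, Complex.normSq_mk]
  ring_nf

/-- For a nonzero `η' = (x', y', z') ∈ ℝ³`, with
`χ = atan2(y', x')` and `ν = atan2(−z', √(x'² + y'²))`, the unit quaternion
`Q_p = Q_z(χ) Q_y(ν)` satisfies `Q_p (1,0,0) Q_p* = η'/‖η'‖`. -/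
theorem stmt11 (x' y' z' : ℝ) (hne : (x', y', z') ≠ (0, 0, 0)) :
    Qz (atan2 y' x') * Qy (atan2 (-z') (Real.sqrt (x' ^ 2 + y' ^ 2))) * pureQ 1 0 0 *
        star (Qz (atan2 y' x') * Qy (atan2 (-z') (Real.sqrt (x' ^ 2 + y' ^ 2)))) =
      pureQ (x' / Real.sqrt (x' ^ 2 + y' ^ 2 + z' ^ 2))
            (y' / Real.sqrt (x' ^ 2 + y' ^ 2 + z' ^ 2))
            (z' / Real.sqrt (x' ^ 2 + y' ^ 2 + z' ^ 2)) := by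
  set r := Real.sqrt (x' ^ 2 + y' ^ 2) with hr
  set R := Real.sqrt (x' ^ 2 + y' ^ 2 + z' ^ 2) with hRdef
  have hS : 0 < x' ^ 2 + y' ^ 2 + z' ^ 2 := by
    by_contra hle
    push_neg at hle
    have hx := sq_nonneg x'; have hy := sq_nonneg y'; have hz := sq_nonneg z'
    have : x' = 0 ∧ y' = 0 ∧ z' = 0 := by
      constructor
      · nlinarith
      constructor <;> nlinarith
    exact hne (by simp [this.1, this.2.1, this.2.2])
  have hR : 0 < R := Real.sqrt_pos.mpr hS
  have hr2 : r ^ 2 = x' ^ 2 + y' ^ 2 := Real.sq_sqrt (by positivity)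
  rw [rot]
  by_cases h : x' ^ 2 + y' ^ 2 = 0
  · have hx : x' = 0 := by nlinarith [sq_nonneg x', sq_nonneg y']
    have hy : y' = 0 := by nlinarith [sq_nonneg x', sq_nonneg y']
    have hz : z' ≠ 0 := by
      intro hz; exact hne (by simp [hx, hy, hz])
    have hr0 : r = 0 := by rw [hr, h, Real.sqrt_zero]
    have hχ : atan2 y' x' = 0 := by
      rw [atan2, hx, hy]
      exact Complex.arg_zero
    have hz2 : (⟨r, -z'⟩ : ℂ) ≠ 0 := by
      simp [Complex.ext_iff, hz]
    have habs : ‖(⟨r, -z'⟩ : ℂ)‖ = R := by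
      rw [abs_mk, hr0, hRdef, hx, hy]
      norm_num
    have hcosν : Real.cos (atan2 (-z') r) = 0 := by
      rw [atan2, Complex.cos_arg hz2]
      simp [habs, hr0]
    have hsinν : Real.sin (atan2 (-z') r) = -z' / R := by
      rw [atan2, Complex.sin_arg, habs]
    rw [hχ, hcosν, hsinν]
    simp [hx, hy, pureQ]
    ring_nf
    rfl
  · have hrpos : 0 < r := Real.sqrt_pos.mpr (lt_of_le_of_ne (by positivity) (Ne.symm h))
    have hz1 : (⟨x', y'⟩ : ℂ) ≠ 0 := by
      intro hc
      rw [Complex.ext_iff] at hc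
      simp only [Complex.zero_re, Complex.zero_im] at hc
      exact h (by rw [hc.1, hc.2]; ring)
    have habs1 : ‖(⟨x', y'⟩ : ℂ)‖ = r := abs_mk x' y'
    have hcosχ : Real.cos (atan2 y' x') = x' / r := by
      rw [atan2, Complex.cos_arg hz1, habs1]
    have hsinχ : Real.sin (atan2 y' x') = y' / r := by
      rw [atan2, Complex.sin_arg, habs1]
    have hz2 : (⟨r, -z'⟩ : ℂ) ≠ 0 := by
      intro hc
      rw [Complex.ext_iff] at hc
      simp only [Complex.zero_re, Complex.zero_im] at hc
      exact ne_of_gt hrpos hc.1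
    have habs2 : ‖(⟨r, -z'⟩ : ℂ)‖ = R := by
      rw [abs_mk]
      rw [hRdef]
      congr 1
      rw [hr2]; ring
    have hcosν : Real.cos (atan2 (-z') r) = r / R := by
      rw [atan2, Complex.cos_arg hz2, habs2]
    have hsinν : Real.sin (atan2 (-z') r) = -z' / R := by
      rw [atan2, Complex.sin_arg, habs2]
    rw [hcosχ, hsinχ, hcosν, hsinν]
    have hrne := ne_of_gt hrpos
    have hRne := ne_of_gt hR
    congr 1 <;> field_simp
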